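/- arXiv:1911.03953 — 2 statements merged into one kernel-verified Lean document; each statement's English description precedes it below -/
import Mathlib

section
/- For a Beltrami wave W(x) = Σ_{k∈Λ} a_k W_k(x) with Λ = -Λ ⊂ S^2 ∩ Q^3, conjugation condition ā_k = a_{-k}, and W_k(x) = (1/√2)(k1 + i k2)e^{iλk·x}, the average of W ⊗ W over T^3 equals (1/2) Σ_{k∈Λ} |a_k|^2 (Id − k⊗k). -/
open MeasureTheory Real Matrix

noncomputable def pd (j : Fin 3) (f : (Fin 3 → ℝ) → ℝ) (x : Fin 3 → ℝ) : ℝ :=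
  fderiv ℝ f x (Pi.single j 1)

noncomputable def curl (V : (Fin 3 → ℝ) → (Fin 3 → ℝ)) (x : Fin 3 → ℝ) : Fin 3 → ℝ :=
  ![pd 1 (fun y => V y 2) x - pd 2 (fun y => V y 1) x,
    pd 2 (fun y => V y 0) x - pd 0 (fun y => V y 2) x,
    pd 0 (fun y => V y 1) x - pd 1 (fun y => V y 0) x]

noncomputable def divg (V : (Fin 3 → ℝ) → (Fin 3 → ℝ)) (x : Fin 3 → ℝ) : ℝ :=
  ∑ j : Fin 3, pd j (fun y => V y j) x

def Torus3 : Set (Fin 3 → ℝ) := Set.univ.pi fun _ => Set.Icc 0 (2 * π)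

def PeriodicField (V : (Fin 3 → ℝ) → (Fin 3 → ℝ)) : Prop :=
  ∀ (x : Fin 3 → ℝ) (j : Fin 3), V (x + Pi.single j (2 * π)) = V x

/- ### auxiliary lemmas -/

lemma intA (m : ℤ) : ∫ t in Set.Icc (0:ℝ) (2*π), Complex.exp (Complex.I * m * t)
    = if m = 0 then ((2*π:ℝ):ℂ) else 0 := by
  rw [MeasureTheory.integral_Icc_eq_integral_Ioc,
      ← intervalIntegral.integral_of_le (by positivity : (0:ℝ) ≤ 2*π)]
  by_cases h : m = 0
  · subst h
    simp
  · rw [if_neg h]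
    have hc : (Complex.I * (m:ℂ)) ≠ 0 :=
      mul_ne_zero Complex.I_ne_zero (by exact_mod_cast h)
    rw [integral_exp_mul_complex hc]
    have h1 : Complex.I * (m:ℂ) * ((2*π:ℝ):ℂ) = (m:ℂ) * (2 * (π:ℂ) * Complex.I) := by
      push_cast; ring
    rw [h1, Complex.exp_int_mul_two_pi_mul_I]
    simp

lemma intB (f : Fin 3 → ℝ → ℂ) :
    ∫ x in Torus3, ∏ j, f j (x j) = ∏ j, ∫ t in Set.Icc (0:ℝ) (2*π), f j t := by
  have hmeas : MeasurableSet Torus3 :=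
    MeasurableSet.univ_pi fun _ => measurableSet_Icc
  rw [← MeasureTheory.integral_indicator hmeas]
  have key : ∀ x : Fin 3 → ℝ, Torus3.indicator (fun x => ∏ j, f j (x j)) x
      = ∏ j, (Set.Icc (0:ℝ) (2*π)).indicator (f j) (x j) := by
    intro x
    by_cases hx : x ∈ Torus3
    · rw [Set.indicator_of_mem hx]
      exact Finset.prod_congr rfl fun j _ =>
        (Set.indicator_of_mem (hx j (Set.mem_univ j)) _).symm
    · rw [Set.indicator_of_notMem hx]
      have hx' : ∃ j, x j ∉ Set.Icc (0:ℝ) (2*π) := by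
        simpa only [Torus3, Set.mem_pi, Set.mem_univ, true_implies, not_forall] using hx
      obtain ⟨j, hj⟩ := hx'
      exact (Finset.prod_eq_zero (Finset.mem_univ j)
        (Set.indicator_of_notMem hj _)).symm
  simp_rw [key]
  rw [MeasureTheory.integral_fintype_prod_volume_eq_prod
    (fun j t => (Set.Icc (0:ℝ) (2*π)).indicator (f j) t)]
  exact Finset.prod_congr rfl fun j _ =>
    MeasureTheory.integral_indicator measurableSet_Icc

lemma intE (u : Fin 3 → ℝ) (hu : ∀ j, ∃ m : ℤ, u j = m) :
    ∫ x in Torus3, Complex.exp (Complex.I * ((u ⬝ᵥ x : ℝ):ℂ))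
      = if u = 0 then (((2*π)^3:ℝ):ℂ) else 0 := by
  choose m hm using hu
  have key : ∀ x : Fin 3 → ℝ, Complex.exp (Complex.I * ((u ⬝ᵥ x : ℝ):ℂ))
      = ∏ j, Complex.exp (Complex.I * (m j : ℂ) * ((x j : ℝ):ℂ)) := by
    intro x
    rw [← Complex.exp_sum]
    congr 1
    have : (u ⬝ᵥ x : ℝ) = ∑ j, (m j : ℝ) * x j := by
      simp only [dotProduct]
      exact Finset.sum_congr rfl fun j _ => by rw [hm j]
    rw [this]
    push_cast
    rw [Finset.mul_sum]
    exact Finset.sum_congr rfl fun j _ => by ring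
  simp_rw [key]
  rw [intB (fun j t => Complex.exp (Complex.I * (m j : ℂ) * (t:ℂ)))]
  simp_rw [intA]
  by_cases hu0 : u = 0
  · have hm0 : ∀ j, m j = 0 := by
      intro j
      have := hm j
      rw [hu0] at this
      have : ((m j : ℝ)) = 0 := by rw [← this]; rfl
      exact_mod_cast this
    simp only [hu0, if_pos rfl, hm0, if_pos rfl]
    rw [Finset.prod_const]
    push_cast
    norm_num
  · rw [if_neg hu0]
    have : ∃ j, u j ≠ 0 := by
      by_contra h
      push_neg at h
      exact hu0 (funext h)
    obtain ⟨j, hj⟩ := this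
    refine Finset.prod_eq_zero (Finset.mem_univ j) ?_
    rw [if_neg]
    intro h0
    exact hj (by rw [hm j, h0]; simp)

lemma frame3 (k b : Fin 3 → ℝ) (hk : ∑ i, (k i)^2 = 1) (hb : ∑ i, (b i)^2 = 1)
    (hd : k ⬝ᵥ b = 0) (i j : Fin 3) :
    k i * k j + b i * b j + (crossProduct k b) i * (crossProduct k b) j
      = if i = j then 1 else 0 := by
  have hk' : k 0^2 + k 1^2 + k 2^2 = 1 := by simpa [Fin.sum_univ_three] using hk
  have hb' : b 0^2 + b 1^2 + b 2^2 = 1 := by simpa [Fin.sum_univ_three] using hb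
  have hd' : k 0 * b 0 + k 1 * b 1 + k 2 * b 2 = 0 := by
    simpa [dotProduct, Fin.sum_univ_three] using hd
  have hMMt : Matrix.of ![k, b, crossProduct k b] * (Matrix.of ![k, b, crossProduct k b])ᵀ = 1 := by
    ext r s
    rw [Matrix.mul_apply]
    simp only [Matrix.transpose_apply]
    fin_cases r <;> fin_cases s <;>
      simp [Fin.sum_univ_three, crossProduct, Matrix.one_apply] <;>
      first
        | linear_combination hk'
        | linear_combination hb'
        | linear_combination hd'
        | linear_combination (b 0^2 + b 1^2 + b 2^2) * hk' + hb'
            - (k 0 * b 0 + k 1 * b 1 + k 2 * b 2) * hd'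
        | ring
  have hMtM : (Matrix.of ![k, b, crossProduct k b])ᵀ * Matrix.of ![k, b, crossProduct k b] = 1 :=
    mul_eq_one_comm.mp hMMt
  have h1 : ((Matrix.of ![k, b, crossProduct k b])ᵀ * Matrix.of ![k, b, crossProduct k b]) i j
      = (1 : Matrix (Fin 3) (Fin 3) ℝ) i j := by rw [hMtM]
  rw [Matrix.mul_apply] at h1
  simp only [Fin.sum_univ_three, Matrix.transpose_apply, Matrix.of_apply,
    Matrix.cons_val_zero, Matrix.cons_val_one, Matrix.head_cons, Matrix.cons_val_two,
    Matrix.tail_cons, Matrix.one_apply] at h1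
  exact h1

/-- For a Beltrami wave W = Σ_{k∈Λ} a_k W_k with Λ = −Λ ⊂ S²∩ℚ³, ā_k = a_{−k} and
W_k = (1/√2)(k1+ik2)e^{iλk·x}, the average of W ⊗ W over T³ is
(1/2) Σ_{k∈Λ} |a_k|² (Id − k⊗k). -/
theorem stmt7 (Λ : Finset (Fin 3 → ℝ))
    (hsphere : ∀ k ∈ Λ, ∑ i, (k i) ^ 2 = 1)
    (hrat : ∀ k ∈ Λ, ∀ i, ∃ q : ℚ, k i = (q : ℝ))
    (hsym : ∀ k ∈ Λ, -k ∈ Λ)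
    (k1 k2 : (Fin 3 → ℝ) → (Fin 3 → ℝ))
    (hk1unit : ∀ k ∈ Λ, ∑ i, (k1 k i) ^ 2 = 1)
    (hk1orth : ∀ k ∈ Λ, k ⬝ᵥ k1 k = 0)
    (hk2 : ∀ k ∈ Λ, k2 k = crossProduct k (k1 k))
    (hframe : ∀ k ∈ Λ, k1 (-k) = k1 k ∧ k2 (-k) = -(k2 k))
    (a : (Fin 3 → ℝ) → ℂ) (hconj : ∀ k ∈ Λ, a (-k) = starRingEnd ℂ (a k))
    (lam : ℕ) (hlam : 0 < lam) (hint : ∀ k ∈ Λ, ∀ i, ∃ n : ℤ, (lam : ℝ) * k i = n)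
    (W : (Fin 3 → ℝ) → (Fin 3 → ℂ))
    (hW : ∀ x i, W x i = ∑ k ∈ Λ, a k * ((1 / Real.sqrt 2 : ℝ)
      * ((k1 k i : ℂ) + Complex.I * (k2 k i : ℂ))
      * Complex.exp (Complex.I * (lam : ℂ) * ((k ⬝ᵥ x : ℝ) : ℂ)))) :
    ∀ i j, (((2 * π) ^ 3 : ℝ) : ℂ)⁻¹ * ∫ x in Torus3, W x i * W x j
      = (((1 / 2) * ∑ k ∈ Λ, ‖a k‖ ^ 2
          * ((if i = j then 1 else 0) - k i * k j) : ℝ) : ℂ) := by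
  intro i j
  classical
  -- notation
  let C : (Fin 3 → ℝ) → Fin 3 → ℂ := fun k r =>
    ((1 / Real.sqrt 2 : ℝ):ℂ) * ((k1 k r : ℂ) + Complex.I * (k2 k r : ℂ))
  let u : (Fin 3 → ℝ) → (Fin 3 → ℝ) → (Fin 3 → ℝ) := fun k k' r => (lam:ℝ) * (k r + k' r)
  -- Step 1: pointwise expansion
  have hWW : ∀ x, W x i * W x j = ∑ k ∈ Λ, ∑ k' ∈ Λ,
      (a k * C k i * (a k' * C k' j)) * Complex.exp (Complex.I * ((u k k' ⬝ᵥ x : ℝ):ℂ)) := by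
    intro x
    rw [hW x i, hW x j, Finset.sum_mul_sum]
    refine Finset.sum_congr rfl fun k hk => Finset.sum_congr rfl fun k' hk' => ?_
    have hd : ((u k k' ⬝ᵥ x : ℝ):ℂ)
        = (lam:ℂ) * ((k ⬝ᵥ x : ℝ):ℂ) + (lam:ℂ) * ((k' ⬝ᵥ x : ℝ):ℂ) := by
      have h0 : (u k k' ⬝ᵥ x : ℝ) = (lam:ℝ) * (k ⬝ᵥ x) + (lam:ℝ) * (k' ⬝ᵥ x) := by
        simp only [dotProduct, u, Finset.mul_sum, ← Finset.sum_add_distrib]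
        exact Finset.sum_congr rfl fun r _ => by ring
      rw [h0]; push_cast; ring
    have hexp : Complex.exp (Complex.I * ((u k k' ⬝ᵥ x : ℝ):ℂ))
        = Complex.exp (Complex.I * (lam:ℂ) * ((k ⬝ᵥ x:ℝ):ℂ))
          * Complex.exp (Complex.I * (lam:ℂ) * ((k' ⬝ᵥ x:ℝ):ℂ)) := by
      rw [← Complex.exp_add, hd]; ring_nf
    rw [hexp]
    simp only [C]
    ring
  -- Step 2: integrability
  have hcont : ∀ (A : ℂ) (v : Fin 3 → ℝ),
      IntegrableOn (fun x => A * Complex.exp (Complex.I * ((v ⬝ᵥ x : ℝ):ℂ))) Torus3 := by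
    intro A v
    apply ContinuousOn.integrableOn_compact (isCompact_univ_pi fun _ => isCompact_Icc)
    apply Continuous.continuousOn
    refine continuous_const.mul (Complex.continuous_exp.comp
      (continuous_const.mul (Complex.continuous_ofReal.comp ?_)))
    exact continuous_finset_sum Finset.univ
      fun r _ => (continuous_const.mul (continuous_apply r))
  -- Step 3: integrate term by term
  have hsplit : ∫ x in Torus3, W x i * W x j = ∑ k ∈ Λ, ∑ k' ∈ Λ,
      (a k * C k i * (a k' * C k' j))
        * ∫ x in Torus3, Complex.exp (Complex.I * ((u k k' ⬝ᵥ x:ℝ):ℂ)) := by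
    simp only [hWW]
    rw [MeasureTheory.integral_finset_sum _
      (fun k _ => integrable_finset_sum _ fun k' _ => hcont _ _)]
    refine Finset.sum_congr rfl fun k hk => ?_
    rw [MeasureTheory.integral_finset_sum _ (fun k' _ => hcont _ _)]
    exact Finset.sum_congr rfl fun k' hk' => integral_const_mul _ _
  -- Step 4: evaluate the integrals
  have hlamR : ((lam:ℝ)) ≠ 0 := by positivity
  have heval : ∀ k ∈ Λ, ∀ k' ∈ Λ,
      (∫ x in Torus3, Complex.exp (Complex.I * ((u k k' ⬝ᵥ x:ℝ):ℂ)))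
        = if k' = -k then (((2*π)^3:ℝ):ℂ) else 0 := by
    intro k hk k' hk'
    have hintu : ∀ r, ∃ m : ℤ, u k k' r = m := by
      intro r
      obtain ⟨m1, h1⟩ := hint k hk r
      obtain ⟨m2, h2⟩ := hint k' hk' r
      exact ⟨m1 + m2, by push_cast [← h1, ← h2]; simp only [u]; ring⟩
    rw [intE _ hintu]
    have hiff : (u k k' = 0) ↔ (k' = -k) := by
      constructor
      · intro h0
        funext r
        have := congrFun h0 r
        simp only [u, Pi.zero_apply] at this
        have : k r + k' r = 0 := by
          rcases mul_eq_zero.mp this with h | h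
          · exact absurd h hlamR
          · exact h
        simp only [Pi.neg_apply]
        linarith
      · intro h
        funext r
        simp [u, h, Pi.neg_apply]
    by_cases h : k' = -k
    · rw [if_pos (hiff.mpr h), if_pos h]
    · rw [if_neg (fun h0 => h (hiff.mp h0)), if_neg h]
  -- Step 5: collapse the double sum
  have hsum : ∫ x in Torus3, W x i * W x j
      = (∑ k ∈ Λ, a k * C k i * (a (-k) * C (-k) j)) * (((2*π)^3:ℝ):ℂ) := by
    rw [hsplit, Finset.sum_mul]
    refine Finset.sum_congr rfl fun k hk => ?_
    have : ∀ k' ∈ Λ, (a k * C k i * (a k' * C k' j))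
          * ∫ x in Torus3, Complex.exp (Complex.I * ((u k k' ⬝ᵥ x:ℝ):ℂ))
        = if k' = -k then (a k * C k i * (a k' * C k' j)) * (((2*π)^3:ℝ):ℂ) else 0 := by
      intro k' hk'
      rw [heval k hk k' hk']
      by_cases h : k' = -k
      · rw [if_pos h, if_pos h]
      · rw [if_neg h, if_neg h, mul_zero]
    rw [Finset.sum_congr rfl this, Finset.sum_ite_eq' Λ (-k)
      (fun k' => (a k * C k i * (a k' * C k' j)) * (((2*π)^3:ℝ):ℂ)),
      if_pos (hsym k hk)]
  -- Step 6: algebra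
  have hterm : ∀ k ∈ Λ, a k * C k i * (a (-k) * C (-k) j)
      = ((((1/2) * ‖a k‖^2 * (k1 k i * k1 k j + k2 k i * k2 k j) : ℝ)):ℂ)
        + Complex.I * ((((1/2) * ‖a k‖^2
            * (k2 k i * k1 k j - k1 k i * k2 k j) : ℝ)):ℂ) := by
    intro k hk
    have h1 := (hframe k hk).1
    have h2 := (hframe k hk).2
    have hz : a k * (starRingEnd ℂ) (a k) = ((‖a k‖^2 : ℝ):ℂ) := by
      rw [Complex.mul_conj]
      norm_cast
      exact (Complex.sq_norm _).symm
    have hs : ((1 / Real.sqrt 2 : ℝ):ℂ) * ((1 / Real.sqrt 2 : ℝ):ℂ) = ((1/2:ℝ):ℂ) := by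
      norm_cast
      rw [div_mul_div_comm, one_mul, Real.mul_self_sqrt (by norm_num : (0:ℝ) ≤ 2)]
    have hCk : C (-k) j = ((1 / Real.sqrt 2 : ℝ):ℂ)
        * ((k1 k j : ℂ) - Complex.I * (k2 k j : ℂ)) := by
      simp only [C, h1, h2, Pi.neg_apply, Complex.ofReal_neg]
      ring
    rw [hconj k hk, hCk]
    simp only [C]
    have hre : a k * (((1 / Real.sqrt 2 : ℝ):ℂ) * ((k1 k i : ℂ) + Complex.I * (k2 k i : ℂ)))
        * ((starRingEnd ℂ) (a k) * (((1 / Real.sqrt 2 : ℝ):ℂ)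
          * ((k1 k j : ℂ) - Complex.I * (k2 k j : ℂ))))
        = (a k * (starRingEnd ℂ) (a k)) * (((1 / Real.sqrt 2 : ℝ):ℂ) * ((1 / Real.sqrt 2 : ℝ):ℂ))
          * (((k1 k i : ℂ) + Complex.I * (k2 k i : ℂ))
            * ((k1 k j : ℂ) - Complex.I * (k2 k j : ℂ))) := by ring
    rw [hre, hz, hs]
    push_cast
    linear_combination (-(((‖a k‖:ℂ))^2 * ((1/2:ℂ)) * (k2 k i : ℂ) * (k2 k j : ℂ)))
      * Complex.I_sq
  -- imaginary part cancels
  have hQ : ∑ k ∈ Λ, ((1/2) * ‖a k‖^2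
      * (k2 k i * k1 k j - k1 k i * k2 k j) : ℝ) = 0 := by
    refine Finset.sum_involution (fun k _ => -k) ?_ ?_ (fun k hk => hsym k hk)
      (fun k _ => neg_neg k)
    · intro k hk
      have h1 := (hframe k hk).1
      have h2 := (hframe k hk).2
      have habs : ‖a (-k)‖ = ‖a k‖ := by
        rw [hconj k hk, Complex.norm_conj]
      rw [habs, h1, h2]
      simp only [Pi.neg_apply]
      ring
    · intro k hk hne hkk
      apply hne
      have : ∀ r, k r = 0 := by
        intro r
        have := congrFun hkk r
        simp only [Pi.neg_apply] at this
        linarith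
      have hk0 : ∑ r, (k r)^2 = 0 := by simp [this]
      rw [hsphere k hk] at hk0
      norm_num at hk0
  -- real part via the frame identity
  have hP : ∀ k ∈ Λ, k1 k i * k1 k j + k2 k i * k2 k j
      = (if i = j then 1 else 0) - k i * k j := by
    intro k hk
    have := frame3 k (k1 k) (hsphere k hk) (hk1unit k hk) (hk1orth k hk) i j
    rw [← hk2 k hk] at this
    linarith
  -- assemble
  rw [hsum]
  have hpi : (((2*π)^3:ℝ):ℂ) ≠ 0 := Complex.ofReal_ne_zero.mpr (by positivity)
  rw [mul_comm ((∑ k ∈ Λ, a k * C k i * (a (-k) * C (-k) j))) (((2*π)^3:ℝ):ℂ),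
    ← mul_assoc, inv_mul_cancel₀ hpi, one_mul]
  rw [Finset.sum_congr rfl hterm, Finset.sum_add_distrib, ← Finset.mul_sum]
  rw [← Complex.ofReal_sum, ← Complex.ofReal_sum, hQ]
  simp only [Complex.ofReal_zero, mul_zero, add_zero]
  norm_cast
  rw [Finset.mul_sum]
  refine Finset.sum_congr rfl fun k hk => ?_
  rw [hP k hk]
  by_cases hij : i = j <;> simp [hij] <;> ring
end

section
/- Define the symmetric traceless matrix field R_0(x) = (1/(λ_0^2 (2π)^3)) [[0, sin(λ_0 x_1), cos(λ_0 x_1)],[sin(λ_0 x_1), 0, 0],[cos(λ_0 x_1), 0, 0]]. Then ∇·R_0 = ∂_t A_0, i.e., the triple (A_0, B_0, R_0) with B_0 = ∇×A_0 solves ∂_t A_0 + (∇×B_0)×B_0 = ∇·R_0. -/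
open MeasureTheory Real Matrix

lemma hasFDerivAt_mul_cos (c a : ℝ) (x : Fin 3 → ℝ) :
    HasFDerivAt (fun y : Fin 3 → ℝ => c * Real.cos (a * y 0))
      ((c * (-Real.sin (a * x 0) * a)) • (ContinuousLinearMap.proj 0 : (Fin 3 → ℝ) →L[ℝ] ℝ)) x := by
  have h2 : HasFDerivAt (fun y : Fin 3 → ℝ => a * y 0)
      (a • (ContinuousLinearMap.proj 0 : (Fin 3 → ℝ) →L[ℝ] ℝ)) x :=
    ((ContinuousLinearMap.proj 0 : (Fin 3 → ℝ) →L[ℝ] ℝ).hasFDerivAt).const_mul a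
  have h3 := (Real.hasDerivAt_cos (a * x 0)).comp_hasFDerivAt x h2
  have h4 := h3.const_mul c
  refine h4.congr_fderiv ?_
  ext y; simp [ContinuousLinearMap.smul_apply]; ring

lemma hasFDerivAt_mul_sin (c a : ℝ) (x : Fin 3 → ℝ) :
    HasFDerivAt (fun y : Fin 3 → ℝ => c * Real.sin (a * y 0))
      ((c * (Real.cos (a * x 0) * a)) • (ContinuousLinearMap.proj 0 : (Fin 3 → ℝ) →L[ℝ] ℝ)) x := by
  have h2 : HasFDerivAt (fun y : Fin 3 → ℝ => a * y 0)
      (a • (ContinuousLinearMap.proj 0 : (Fin 3 → ℝ) →L[ℝ] ℝ)) x :=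
    ((ContinuousLinearMap.proj 0 : (Fin 3 → ℝ) →L[ℝ] ℝ).hasFDerivAt).const_mul a
  have h3 := (Real.hasDerivAt_sin (a * x 0)).comp_hasFDerivAt x h2
  have h4 := h3.const_mul c
  refine h4.congr_fderiv ?_
  ext y; simp [ContinuousLinearMap.smul_apply]; ring

lemma pd_mul_cos (c a : ℝ) (j : Fin 3) (x : Fin 3 → ℝ) :
    pd j (fun y => c * Real.cos (a * y 0)) x
      = if j = 0 then c * (-Real.sin (a * x 0) * a) else 0 := by
  rw [pd, (hasFDerivAt_mul_cos c a x).fderiv]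
  rcases j with ⟨j, hj⟩
  interval_cases j <;> simp

lemma pd_mul_sin (c a : ℝ) (j : Fin 3) (x : Fin 3 → ℝ) :
    pd j (fun y => c * Real.sin (a * y 0)) x
      = if j = 0 then c * (Real.cos (a * x 0) * a) else 0 := by
  rw [pd, (hasFDerivAt_mul_sin c a x).fderiv]
  rcases j with ⟨j, hj⟩
  interval_cases j <;> simp

lemma pd_neg_mul_sin (c a : ℝ) (j : Fin 3) (x : Fin 3 → ℝ) :
    pd j (fun y => -(c * Real.sin (a * y 0))) x
      = if j = 0 then -(c * (Real.cos (a * x 0) * a)) else 0 := by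
  have h := pd_mul_sin (-c) a j x
  simp only [neg_mul] at h
  exact h

lemma pd_const (c : ℝ) (j : Fin 3) (x : Fin 3 → ℝ) :
    pd j (fun _ => c) x = 0 := by
  simp [pd]

lemma curl_special (r a : ℝ) (x : Fin 3 → ℝ) :
    curl (fun y => r • ![(0:ℝ), Real.cos (a * y 0), -Real.sin (a * y 0)]) x
      = (r * a) • ![(0:ℝ), Real.cos (a * x 0), -Real.sin (a * x 0)] := by
  funext i
  have e0 : (fun y : Fin 3 → ℝ => (r • ![(0:ℝ), Real.cos (a * y 0), -Real.sin (a * y 0)]) 0)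
      = fun _ => (0:ℝ) := by funext y; simp
  have e1 : (fun y : Fin 3 → ℝ => (r • ![(0:ℝ), Real.cos (a * y 0), -Real.sin (a * y 0)]) 1)
      = fun y => r * Real.cos (a * y 0) := by funext y; simp
  rcases i with ⟨i, hi⟩
  interval_cases i <;>
  · simp [curl, e0, e1, pd_mul_cos, pd_mul_sin, pd_neg_mul_sin, pd_const]
    try ring

/-- R₀(x) = (1/(λ₀²(2π)³))[[0,sin(λ₀x₁),cos(λ₀x₁)],[sin(λ₀x₁),0,0],[cos(λ₀x₁),0,0]] is
symmetric and traceless, and (A₀,B₀,R₀) with B₀ = ∇×A₀ solves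
∂ₜA₀ + (∇×B₀)×B₀ = ∇·R₀. -/
theorem stmt11 (lam0 : ℕ) (hlam0 : 0 < lam0)
    (A0 : ℝ → (Fin 3 → ℝ) → (Fin 3 → ℝ))
    (hA0 : ∀ t x, A0 t x = (t / ((lam0 : ℝ) * (2 * π) ^ 3))
      • ![0, Real.cos ((lam0 : ℝ) * x 0), -Real.sin ((lam0 : ℝ) * x 0)])
    (B0 : ℝ → (Fin 3 → ℝ) → (Fin 3 → ℝ))
    (hB0 : ∀ t x, B0 t x = curl (A0 t) x)
    (R0 : (Fin 3 → ℝ) → Matrix (Fin 3) (Fin 3) ℝ)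
    (hR0 : ∀ x, R0 x = (1 / ((lam0 : ℝ) ^ 2 * (2 * π) ^ 3))
      • ![![0, Real.sin ((lam0 : ℝ) * x 0), Real.cos ((lam0 : ℝ) * x 0)],
          ![Real.sin ((lam0 : ℝ) * x 0), 0, 0],
          ![Real.cos ((lam0 : ℝ) * x 0), 0, 0]]) :
    (∀ x, (R0 x).IsSymm ∧ Matrix.trace (R0 x) = 0) ∧
    (∀ t x i, deriv (fun s => A0 s x i) t
        + crossProduct (curl (B0 t) x) (B0 t x) i
        = ∑ j, pd j (fun y => R0 y i j) x) := by
  have hl : ((lam0 : ℝ)) ≠ 0 := Nat.cast_ne_zero.mpr hlam0.ne'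
  have hpi : (π : ℝ) ≠ 0 := Real.pi_ne_zero
  constructor
  · intro x
    constructor
    · rw [hR0, Matrix.IsSymm]
      ext i j
      fin_cases i <;> fin_cases j <;> rfl
    · have h : Matrix.trace (![![0, Real.sin ((lam0 : ℝ) * x 0), Real.cos ((lam0 : ℝ) * x 0)],
          ![Real.sin ((lam0 : ℝ) * x 0), 0, 0],
          ![Real.cos ((lam0 : ℝ) * x 0), 0, 0]] : Matrix (Fin 3) (Fin 3) ℝ) = 0 := by
        simp [Matrix.trace, Matrix.diag, Fin.sum_univ_three, Matrix.vecHead, Matrix.vecTail]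
      rw [hR0]
      exact (Matrix.trace_smul (1 / ((lam0 : ℝ) ^ 2 * (2 * π) ^ 3)) _).trans (by rw [h, smul_zero])
  · intro t x i
    set lr : ℝ := (lam0 : ℝ) with hlr
    -- B0 explicit
    have hAfun : ∀ s : ℝ, A0 s = fun y => (s / (lr * (2 * π) ^ 3))
        • ![(0:ℝ), Real.cos (lr * y 0), -Real.sin (lr * y 0)] := fun s => funext (hA0 s)
    have hBval : ∀ y, B0 t y = (t / (lr * (2 * π) ^ 3) * lr)
        • ![(0:ℝ), Real.cos (lr * y 0), -Real.sin (lr * y 0)] := by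
      intro y
      rw [hB0, hAfun, curl_special]
    have hBfun : B0 t = fun y => (t / (lr * (2 * π) ^ 3) * lr)
        • ![(0:ℝ), Real.cos (lr * y 0), -Real.sin (lr * y 0)] := funext hBval
    have hcurlB : curl (B0 t) x = lr • B0 t x := by
      rw [hBval x, hBfun, curl_special, smul_smul]
      congr 1
      ring
    -- cross product vanishes
    have hcross : crossProduct (curl (B0 t) x) (B0 t x) = 0 := by
      rw [hcurlB, _root_.map_smul, LinearMap.smul_apply, cross_self, smul_zero]
    -- time derivative
    have hderiv : ∀ i : Fin 3, deriv (fun s => A0 s x i) t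
        = ![(0:ℝ), Real.cos (lr * x 0), -Real.sin (lr * x 0)] i / (lr * (2 * π) ^ 3) := by
      intro i
      have he : (fun s => A0 s x i)
          = fun s => s * (![(0:ℝ), Real.cos (lr * x 0), -Real.sin (lr * x 0)] i
              / (lr * (2 * π) ^ 3)) := by
        funext s
        rw [hA0]
        simp [Pi.smul_apply, smul_eq_mul]
        ring
      rw [he]
      simpa using ((hasDerivAt_id t).mul_const
        (![(0:ℝ), Real.cos (lr * x 0), -Real.sin (lr * x 0)] i / (lr * (2 * π) ^ 3))).deriv
    -- RHS entries
    have f00 : (fun y => R0 y 0 0) = fun _ : Fin 3 → ℝ => (0:ℝ) := by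
      funext y; rw [hR0]; erw [Pi.smul_apply, Pi.smul_apply]; simp [Matrix.vecHead, Matrix.vecTail]; try ring
    have f01 : (fun y => R0 y 0 1)
        = fun y => (1 / (lr ^ 2 * (2 * π) ^ 3)) * Real.sin (lr * y 0) := by
      funext y; rw [hR0]; erw [Pi.smul_apply, Pi.smul_apply]; simp [Matrix.vecHead, Matrix.vecTail]; try ring
    have f02 : (fun y => R0 y 0 2)
        = fun y => (1 / (lr ^ 2 * (2 * π) ^ 3)) * Real.cos (lr * y 0) := by
      funext y; rw [hR0]; erw [Pi.smul_apply, Pi.smul_apply]; simp [Matrix.vecHead, Matrix.vecTail]; try ring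
    have f10 : (fun y => R0 y 1 0)
        = fun y => (1 / (lr ^ 2 * (2 * π) ^ 3)) * Real.sin (lr * y 0) := by
      funext y; rw [hR0]; erw [Pi.smul_apply, Pi.smul_apply]; simp [Matrix.vecHead, Matrix.vecTail]; try ring
    have f20 : (fun y => R0 y 2 0)
        = fun y => (1 / (lr ^ 2 * (2 * π) ^ 3)) * Real.cos (lr * y 0) := by
      funext y; rw [hR0]; erw [Pi.smul_apply, Pi.smul_apply]; simp [Matrix.vecHead, Matrix.vecTail]; try ring
    have f11 : (fun y => R0 y 1 1) = fun _ : Fin 3 → ℝ => (0:ℝ) := by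
      funext y; rw [hR0]; erw [Pi.smul_apply, Pi.smul_apply]; simp [Matrix.vecHead, Matrix.vecTail]; try ring
    have f12 : (fun y => R0 y 1 2) = fun _ : Fin 3 → ℝ => (0:ℝ) := by
      funext y; rw [hR0]; erw [Pi.smul_apply, Pi.smul_apply]; simp [Matrix.vecHead, Matrix.vecTail]; try ring
    have f21 : (fun y => R0 y 2 1) = fun _ : Fin 3 → ℝ => (0:ℝ) := by
      funext y; rw [hR0]; erw [Pi.smul_apply, Pi.smul_apply]; simp [Matrix.vecHead, Matrix.vecTail]; try ring
    have f22 : (fun y => R0 y 2 2) = fun _ : Fin 3 → ℝ => (0:ℝ) := by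
      funext y; rw [hR0]; erw [Pi.smul_apply, Pi.smul_apply]; simp [Matrix.vecHead, Matrix.vecTail]; try ring
    rw [Fin.sum_univ_three]
    rcases i with ⟨i, hi⟩
    interval_cases i
    · show deriv (fun s => A0 s x 0) t + (crossProduct (curl (B0 t) x)) (B0 t x) 0
        = pd 0 (fun y => R0 y 0 0) x + pd 1 (fun y => R0 y 0 1) x + pd 2 (fun y => R0 y 0 2) x
      rw [hderiv 0, hcross, f00, f01, f02, pd_const, pd_mul_sin, pd_mul_cos]
      simp [Fin.ext_iff]
    · show deriv (fun s => A0 s x 1) t + (crossProduct (curl (B0 t) x)) (B0 t x) 1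
        = pd 0 (fun y => R0 y 1 0) x + pd 1 (fun y => R0 y 1 1) x + pd 2 (fun y => R0 y 1 2) x
      rw [hderiv 1, hcross, f10, f11, f12, pd_const, pd_const, pd_mul_sin]
      simp [Fin.ext_iff]
      try field_simp
      try ring
    · show deriv (fun s => A0 s x 2) t + (crossProduct (curl (B0 t) x)) (B0 t x) 2
        = pd 0 (fun y => R0 y 2 0) x + pd 1 (fun y => R0 y 2 1) x + pd 2 (fun y => R0 y 2 2) x
      rw [hderiv 2, hcross, f20, f21, f22, pd_const, pd_const, pd_mul_cos]
      simp [Fin.ext_iff]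
      try field_simp
      try ring
end
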